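/- Let G be a minimal counterexample to the statement that all planar graphs have 3-weak-dynamic number at most 6, chosen with the fewest edges and, among those, the fewest vertices. Then G has no pair of adjacent vertices both of degree at least 4. -/

import Mathlib

open SimpleGraph

/-- `H` is a minor of `G`: there are nonempty, connected, pairwise disjoint branch sets
in `G`, with an edge of `G` between the branch sets of any two adjacent vertices of `H`. -/
def HasMinor {V W : Type} (G : SimpleGraph V) (H : SimpleGraph W) : Prop :=
  ∃ f : W → Set V,
    (∀ w, (f w).Nonempty) ∧
    (∀ w, (G.induce (f w)).Connected) ∧
    (∀ w w', w ≠ w' → Disjoint (f w) (f w')) ∧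
    (∀ w w', H.Adj w w' → ∃ a ∈ f w, ∃ b ∈ f w', G.Adj a b)

/-- A graph is planar iff it has no `K₅` minor and no `K_{3,3}` minor (Wagner's theorem). -/
def IsPlanar {V : Type} (G : SimpleGraph V) : Prop :=
  ¬ HasMinor G (⊤ : SimpleGraph (Fin 5)) ∧
  ¬ HasMinor G (completeBipartiteGraph (Fin 3) (Fin 3))

/-- The degree of a vertex `v`, the number of its neighbors. -/
noncomputable def deg {V : Type} (G : SimpleGraph V) (v : V) : ℕ :=
  (G.neighborSet v).ncard

/-- `G` admits a `k`-weak-dynamic coloring with `n` colors: a (not necessarily proper)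
coloring such that every vertex `v` sees at least `min k (d v)` colors on its neighborhood. -/
def WDColorable {V : Type} (G : SimpleGraph V) (k n : ℕ) : Prop :=
  ∃ c : V → Fin n, ∀ v, min k (deg G v) ≤ (c '' G.neighborSet v).ncard

lemma hasMinor_mono {V W : Type} {G G' : SimpleGraph V} (hle : G ≤ G')
    (H : SimpleGraph W) (h : HasMinor G H) : HasMinor G' H := by
  obtain ⟨f, h1, h2, h3, h4⟩ := h
  refine ⟨f, h1, fun w => (h2 w).mono ?_, h3, fun w w' hww' => ?_⟩
  · exact fun a b hab => hle hab
  · obtain ⟨a, ha, b, hb, hab⟩ := h4 w w' hww'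
    exact ⟨a, ha, b, hb, hle hab⟩

/-- A minimal counterexample has no pair of adjacent vertices both of degree at least 4. -/
theorem minCounterexample_no_adjacent_deg4 {V : Type} [Fintype V] (G : SimpleGraph V)
    (hplanar : IsPlanar G) (hcex : ¬ WDColorable G 3 6)
    (hminEdges : ∀ (W : Type) [Fintype W] (H : SimpleGraph W),
      IsPlanar H → H.edgeSet.ncard < G.edgeSet.ncard → WDColorable H 3 6)
    (hminVerts : ∀ (W : Type) [Fintype W] (H : SimpleGraph W),
      IsPlanar H → ¬ WDColorable H 3 6 → H.edgeSet.ncard = G.edgeSet.ncard →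
      Nat.card V ≤ Nat.card W) :
    ¬ ∃ u v : V, G.Adj u v ∧ 4 ≤ deg G u ∧ 4 ≤ deg G v := by
  rintro ⟨u, v, huv, hdu, hdv⟩
  set H : SimpleGraph V := G.deleteEdges {s(u, v)} with hH
  have hHle : H ≤ G := SimpleGraph.deleteEdges_le _
  -- H is planar
  have hHplanar : IsPlanar H :=
    ⟨fun h => hplanar.1 (hasMinor_mono hHle _ h),
     fun h => hplanar.2 (hasMinor_mono hHle _ h)⟩
  -- H has fewer edges
  have hedges : H.edgeSet = G.edgeSet \ {s(u, v)} := by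
    simp [hH, SimpleGraph.edgeSet_deleteEdges]
  have hlt : H.edgeSet.ncard < G.edgeSet.ncard := by
    rw [hedges]
    exact Set.ncard_diff_singleton_lt_of_mem (by rw [SimpleGraph.mem_edgeSet]; exact huv)
      (Set.toFinite _)
  obtain ⟨c, hc⟩ := hminEdges V H hHplanar hlt
  -- neighborhoods in H
  have hnbu : H.neighborSet u = G.neighborSet u \ {v} := by
    ext x
    simp only [SimpleGraph.mem_neighborSet, hH, SimpleGraph.deleteEdges_adj,
      Set.mem_diff, Set.mem_singleton_iff, Set.mem_setOf_eq]
    constructor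
    · rintro ⟨h1, h2⟩
      refine ⟨h1, fun hx => h2 ?_⟩
      subst hx; rfl
    · rintro ⟨h1, h2⟩
      refine ⟨h1, fun he => h2 ?_⟩
      rcases (Sym2.eq_iff).mp he with ⟨_, h⟩ | ⟨h, _⟩
      · exact h
      · exact absurd h (G.ne_of_adj huv)
  have hnbv : H.neighborSet v = G.neighborSet v \ {u} := by
    ext x
    simp only [SimpleGraph.mem_neighborSet, hH, SimpleGraph.deleteEdges_adj,
      Set.mem_diff, Set.mem_singleton_iff, Set.mem_setOf_eq]
    constructor
    · rintro ⟨h1, h2⟩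
      refine ⟨h1, fun hx => h2 ?_⟩
      subst hx; exact Sym2.eq_swap
    · rintro ⟨h1, h2⟩
      refine ⟨h1, fun he => h2 ?_⟩
      rcases (Sym2.eq_iff).mp he with ⟨h, _⟩ | ⟨_, h⟩
      · exact absurd h (G.ne_of_adj huv).symm
      · exact h
  have hnbw : ∀ w, w ≠ u → w ≠ v → H.neighborSet w = G.neighborSet w := by
    intro w hwu hwv
    ext x
    simp only [SimpleGraph.mem_neighborSet, hH, SimpleGraph.deleteEdges_adj,
      Set.mem_singleton_iff, Set.mem_setOf_eq]
    constructor
    · exact fun h => h.1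
    · intro h
      refine ⟨h, fun he => ?_⟩
      rcases (Sym2.eq_iff).mp he with ⟨h1, _⟩ | ⟨h2, _⟩
      · exact hwu h1
      · exact hwv h2
  -- the same coloring works for G
  apply hcex
  refine ⟨c, fun w => ?_⟩
  by_cases hwu : w = u
  · subst hwu
    have hsub : H.neighborSet w ⊆ G.neighborSet w := by
      rw [hnbu]; exact Set.diff_subset
    have hdH : 3 ≤ deg H w := by
      have : deg H w = deg G w - 1 := by
        rw [deg, deg, hnbu,
          Set.ncard_diff_singleton_of_mem (by exact huv)]
      omega
    calc min 3 (deg G w) ≤ min 3 (deg H w) := by omega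
      _ ≤ (c '' H.neighborSet w).ncard := hc w
      _ ≤ (c '' G.neighborSet w).ncard :=
        Set.ncard_le_ncard (Set.image_mono hsub) (Set.toFinite _)
  by_cases hwv : w = v
  · subst hwv
    have hsub : H.neighborSet w ⊆ G.neighborSet w := by
      rw [hnbv]; exact Set.diff_subset
    have hdH : 3 ≤ deg H w := by
      have : deg H w = deg G w - 1 := by
        rw [deg, deg, hnbv,
          Set.ncard_diff_singleton_of_mem (by exact huv.symm)]
      omega
    calc min 3 (deg G w) ≤ min 3 (deg H w) := by omega
      _ ≤ (c '' H.neighborSet w).ncard := hc w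
      _ ≤ (c '' G.neighborSet w).ncard :=
        Set.ncard_le_ncard (Set.image_mono hsub) (Set.toFinite _)
  · have heq := hnbw w hwu hwv
    have : deg H w = deg G w := by rw [deg, deg, heq]
    calc min 3 (deg G w) = min 3 (deg H w) := by omega
      _ ≤ (c '' H.neighborSet w).ncard := hc w
      _ = (c '' G.neighborSet w).ncard := by rw [heq]
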